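/- With μ(ℓ) as in the previous recursion and normalized so that Σ_{ℓ=0}^n μ(ℓ) = 1, the derivative at m = 0 of the mean Σ_{ℓ=0}^n ℓ·μ(ℓ) (viewed as a function of m ∈ [0,π̄]) equals (λ_G n)/(γ π̄) · ( 1 + Σ_{ℓ=1}^{n−1} (λ_L/γ)^ℓ ∏_{j=1}^{ℓ} (1 − j/n) ). -/

import Mathlib

open Finset

lemma aux_telescope (lamL gam : ℝ) (hg : gam ≠ 0) (w : ℕ → ℝ) :
    ∀ k : ℕ, ((k : ℝ) + 1) *
        ∏ j ∈ Finset.range k, (w j * (lamL * ((j : ℝ) + 1)) / (gam * ((j : ℝ) + 2)))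
      = (lamL / gam) ^ k * ∏ j ∈ Finset.range k, w j := by
  intro k
  induction k with
  | zero => simp
  | succ k ih =>
    rw [Finset.prod_range_succ, Finset.prod_range_succ, pow_succ]
    have hk1 : ((k : ℝ) + 1) ≠ 0 := by positivity
    have hk2 : ((k : ℝ) + 2) ≠ 0 := by positivity
    have hPk : ∏ j ∈ Finset.range k, (w j * (lamL * ((j : ℝ) + 1)) / (gam * ((j : ℝ) + 2)))
        = (lamL / gam) ^ k * (∏ j ∈ Finset.range k, w j) / ((k : ℝ) + 1) := by
      rw [eq_div_iff hk1]
      linarith [ih]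
    rw [hPk]
    push_cast
    field_simp
    ring

theorem stmt_4 (n : ℕ) (hn : 1 ≤ n) (lamL lamG gam pibar : ℝ)
    (hL : 0 < lamL) (hG : 0 < lamG) (hg : 0 < gam) (hpi : 0 < pibar)
    (μ : ℝ → ℕ → ℝ)
    (hrec : ∀ m ∈ Set.Icc (0:ℝ) pibar, ∀ ℓ : ℕ, ℓ ≤ n - 1 →
      gam * (ℓ + 1 : ℝ) * μ m (ℓ + 1) =
        (1 - (ℓ : ℝ) / n) * (lamL * ℓ + lamG * ((n : ℝ) / pibar) * m) * μ m ℓ)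
    (hprob : ∀ m ∈ Set.Icc (0:ℝ) pibar, (∀ ℓ ≤ n, 0 ≤ μ m ℓ) ∧
      ∑ ℓ ∈ Finset.range (n + 1), μ m ℓ = 1) :
    HasDerivWithinAt (fun m => ∑ ℓ ∈ Finset.range (n + 1), (ℓ : ℝ) * μ m ℓ)
      ((lamG * n) / (gam * pibar) *
        (1 + ∑ ℓ ∈ Finset.Icc 1 (n - 1),
          (lamL / gam) ^ ℓ * ∏ j ∈ Finset.Icc 1 ℓ, (1 - (j : ℝ) / n))) 
      (Set.Icc 0 pibar) 0 := by
  classical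
  have hn0 : (0:ℝ) < (n : ℝ) := by exact_mod_cast hn
  set a : ℝ := lamG * n / pibar with ha
  set f : ℕ → ℝ → ℝ :=
    fun j m => (1 - (j : ℝ) / n) * (lamL * j + a * m) / (gam * ((j : ℝ) + 1)) with hfdef
  set c : ℝ → ℕ → ℝ := fun m ℓ => ∏ j ∈ Finset.range ℓ, f j m with hcdef
  -- μ m ℓ = c m ℓ * μ m 0
  have hμ : ∀ m ∈ Set.Icc (0:ℝ) pibar, ∀ ℓ, ℓ ≤ n → μ m ℓ = c m ℓ * μ m 0 := by
    intro m hm ℓ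
    induction ℓ with
    | zero => intro _; simp [hcdef]
    | succ k ih =>
      intro hk
      have hk' : k ≤ n - 1 := by omega
      have hrk := hrec m hm k hk'
      have hne : gam * ((k : ℝ) + 1) ≠ 0 := by positivity
      have ihk := ih (by omega)
      have h1 : μ m (k + 1) =
          (1 - (k : ℝ) / n) * (lamL * k + lamG * ((n : ℝ) / pibar) * m) * μ m k
            / (gam * ((k : ℝ) + 1)) := by
        rw [← hrk]
        field_simp
      rw [h1, ihk, hcdef]
      simp only [Finset.prod_range_succ]
      rw [hfdef, ha]
      have hpi' : pibar ≠ 0 := ne_of_gt hpi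
      field_simp
  set P : ℕ → ℝ → ℝ := fun k m => ∏ j ∈ Finset.range k, f (j + 1) m with hPdef
  set Q : ℝ → ℝ := fun m => (∑ k ∈ Finset.range n, ((k : ℝ) + 1) * P k m) * (a / gam)
    with hQdef
  set R : ℝ → ℝ := fun m => (∑ k ∈ Finset.range n, P k m) * (a / gam) with hRdef
  -- N m = m * Q m
  have hf0 : ∀ m : ℝ, f 0 m = a * m / gam := by
    intro m; rw [hfdef]; norm_num
  have hcsucc : ∀ m : ℝ, ∀ k : ℕ, c m (k + 1) = P k m * (a * m / gam) := by
    intro m k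
    rw [hcdef, hPdef]
    simp only [Finset.prod_range_succ']
    rw [hf0]
  have hN : ∀ m : ℝ, (∑ ℓ ∈ Finset.range (n + 1), (ℓ : ℝ) * c m ℓ) = m * Q m := by
    intro m
    rw [Finset.sum_range_succ']
    simp only [Nat.cast_zero, zero_mul, add_zero, hQdef]
    rw [Finset.sum_mul, Finset.mul_sum]
    apply Finset.sum_congr rfl
    intro k _
    rw [hcsucc]
    push_cast
    ring
  have hD : ∀ m : ℝ, (∑ ℓ ∈ Finset.range (n + 1), c m ℓ) = 1 + m * R m := by
    intro m
    rw [Finset.sum_range_succ']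
    have hc0 : c m 0 = 1 := by simp [hcdef]
    rw [hc0]
    simp only [hRdef]
    rw [Finset.sum_mul, Finset.mul_sum, add_comm]
    congr 1
    apply Finset.sum_congr rfl
    intro k _
    rw [hcsucc]
    ring
  -- the mean equals (m * Q m) / (1 + m * R m) on the interval
  have hmean : ∀ m ∈ Set.Icc (0:ℝ) pibar,
      (∑ ℓ ∈ Finset.range (n + 1), (ℓ : ℝ) * μ m ℓ) = (m * Q m) / (1 + m * R m) := by
    intro m hm
    have hsum1 : (∑ ℓ ∈ Finset.range (n + 1), c m ℓ) * μ m 0 = 1 := by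
      rw [← (hprob m hm).2, Finset.sum_mul]
      apply Finset.sum_congr rfl
      intro ℓ hℓ
      rw [← hμ m hm ℓ (by simp at hℓ; omega)]
    have hDne : (∑ ℓ ∈ Finset.range (n + 1), c m ℓ) ≠ 0 := by
      intro h; rw [h, zero_mul] at hsum1; norm_num at hsum1
    have hμ0 : μ m 0 = (∑ ℓ ∈ Finset.range (n + 1), c m ℓ)⁻¹ :=
      eq_inv_of_mul_eq_one_right hsum1
    calc (∑ ℓ ∈ Finset.range (n + 1), (ℓ : ℝ) * μ m ℓ)
        = (∑ ℓ ∈ Finset.range (n + 1), (ℓ : ℝ) * c m ℓ) * μ m 0 := by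
          rw [Finset.sum_mul]
          apply Finset.sum_congr rfl
          intro ℓ hℓ
          rw [hμ m hm ℓ (by simp at hℓ; omega)]; ring
      _ = (m * Q m) / (1 + m * R m) := by
          rw [hμ0, hN, ← hD m, div_eq_mul_inv]
  -- differentiability
  have hfd : ∀ j : ℕ, DifferentiableAt ℝ (f j) 0 := by
    intro j
    rw [hfdef]
    exact (((differentiableAt_const _).mul
      ((differentiableAt_const _).add ((differentiableAt_fun_id).const_mul a))).div_const _)
  have hPd : ∀ k : ℕ, DifferentiableAt ℝ (P k) 0 := by
    intro k
    rw [hPdef]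
    exact DifferentiableAt.fun_finsetProd fun j _ => hfd (j + 1)
  have hQd : DifferentiableAt ℝ Q 0 := by
    rw [hQdef]
    exact (DifferentiableAt.fun_sum fun k _ => (hPd k).const_mul _).mul_const _
  have hRd : DifferentiableAt ℝ R 0 := by
    rw [hRdef]
    exact (DifferentiableAt.fun_sum fun k _ => hPd k).mul_const _
  have hNum : HasDerivAt (fun m => m * Q m) (Q 0) 0 := by
    have := (hasDerivAt_id' (x := (0:ℝ))).fun_mul hQd.hasDerivAt
    simpa using this
  have hDen : HasDerivAt (fun m => 1 + m * R m) (R 0) 0 := by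
    have := ((hasDerivAt_id (0:ℝ)).mul hRd.hasDerivAt).const_add 1
    simpa using this
  have hDen0 : (fun m => 1 + m * R m) 0 ≠ 0 := by norm_num
  have hdiv : HasDerivAt (fun m => (m * Q m) / (1 + m * R m)) (Q 0) 0 := by
    have := hNum.fun_div hDen hDen0
    simpa using this
  have hfinal : HasDerivWithinAt
      (fun m => ∑ ℓ ∈ Finset.range (n + 1), (ℓ : ℝ) * μ m ℓ) (Q 0)
      (Set.Icc 0 pibar) 0 := by
    refine (hdiv.hasDerivWithinAt).congr hmean ?_
    exact hmean 0 (Set.mem_Icc.mpr ⟨le_refl _, le_of_lt hpi⟩)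
  -- compute Q 0
  have hval : Q 0 = (lamG * n) / (gam * pibar) *
      (1 + ∑ ℓ ∈ Finset.Icc 1 (n - 1),
        (lamL / gam) ^ ℓ * ∏ j ∈ Finset.Icc 1 ℓ, (1 - (j : ℝ) / n)) := by
    have hP0 : ∀ k : ℕ, ((k : ℝ) + 1) * P k 0
        = (lamL / gam) ^ k * ∏ j ∈ Finset.range k, (1 - ((j : ℝ) + 1) / n) := by
      intro k
      have heq : P k 0 = ∏ j ∈ Finset.range k,
          ((1 - ((j : ℝ) + 1) / n) * (lamL * ((j : ℝ) + 1)) / (gam * ((j : ℝ) + 2))) := by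
        rw [hPdef]
        apply Finset.prod_congr rfl
        intro j _
        rw [hfdef]
        push_cast
        ring_nf
      rw [heq]
      exact aux_telescope lamL gam (ne_of_gt hg) _ k
    have hsum : (∑ k ∈ Finset.range n, ((k : ℝ) + 1) * P k 0)
        = 1 + ∑ ℓ ∈ Finset.Icc 1 (n - 1),
            (lamL / gam) ^ ℓ * ∏ j ∈ Finset.Icc 1 ℓ, (1 - (j : ℝ) / n) := by
      have hsplit : Finset.range n = insert 0 (Finset.Icc 1 (n - 1)) := by
        ext t; simp [Finset.mem_Icc]; omega
      rw [hsplit, Finset.sum_insert (by simp)]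
      have h0 : ((0:ℕ) : ℝ) + 1 = 1 := by norm_num
      rw [hP0 0]
      simp only [Finset.range_zero, Finset.prod_empty, pow_zero, mul_one, one_mul]
      congr 1
      apply Finset.sum_congr rfl
      intro k hk
      rw [hP0 k]
      congr 1
      rw [← Finset.Ico_add_one_right_eq_Icc, Finset.prod_Ico_eq_prod_range]
      apply Finset.prod_congr (by norm_num)
      intro j _
      push_cast
      ring_nf
    rw [hQdef]
    simp only []
    rw [hsum, ha]
    have hpi' : pibar ≠ 0 := ne_of_gt hpi
    have hg' : gam ≠ 0 := ne_of_gt hg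
    field_simp
  rw [← hval]
  exact hfinal
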